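/- Let V be a complex inner product space of matrix-valued polynomials with orthonormal sequence Q₀, Q₁, Q₂, … where Qₙ has degree n (orthonormality in the module sense: ⟨Qₘ, Qₙ⟩ = δₘₙ I), and let T be a right-module endomorphism of V, symmetric with respect to ⟨·,·⟩, such that Qₙ T has degree at most n+1 for each n. Then ⟨Qₙ T, Qⱼ⟩ = 0 for all j < n−1, and consequently Qₙ T = Xₙ Q_{n+1} + Yₙ Qₙ + Zₙ Q_{n−1} for matrices Xₙ, Yₙ, Zₙ with Zₙ₊₁ = Xₙ* and Yₙ = Yₙ*. -/

import Mathlib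

open Polynomial Matrix

/-- Proposition 3.3 in the matrix-valued setting: a symmetric right-module endomorphism
`T` of the space of matrix polynomials that raises the degree of each orthonormal
polynomial `Qₙ` by at most one acts block-tridiagonally, with hermitian block
tridiagonal matrix: `Qₙ T = Xₙ Q_{n+1} + Yₙ Qₙ + Zₙ Q_{n-1}`, `Z_{n+1} = Xₙ*`,
`Yₙ = Yₙ*`. -/
theorem stmt14 (R : ℕ)
    (ip : Polynomial (Matrix (Fin R) (Fin R) ℂ) → Polynomial (Matrix (Fin R) (Fin R) ℂ) →
      Matrix (Fin R) (Fin R) ℂ)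
    (hadd_left : ∀ P₁ P₂ S, ip (P₁ + P₂) S = ip P₁ S + ip P₂ S)
    (hadd_right : ∀ P S₁ S₂, ip P (S₁ + S₂) = ip P S₁ + ip P S₂)
    (hmul_left : ∀ (A : Matrix (Fin R) (Fin R) ℂ) P S, ip (C A * P) S = A * ip P S)
    (hmul_right : ∀ (A : Matrix (Fin R) (Fin R) ℂ) P S, ip P (C A * S) = ip P S * Aᴴ)
    (Q : ℕ → Polynomial (Matrix (Fin R) (Fin R) ℂ))
    (hdeg : ∀ n, (Q n).natDegree = n)
    (honb : ∀ m n, ip (Q m) (Q n) = if m = n then 1 else 0)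
    (hbasis : ∀ P : Polynomial (Matrix (Fin R) (Fin R) ℂ),
      ∃ c : ℕ → Matrix (Fin R) (Fin R) ℂ,
        P = ∑ j ∈ Finset.range (P.natDegree + 1), C (c j) * Q j)
    (T : Polynomial (Matrix (Fin R) (Fin R) ℂ) → Polynomial (Matrix (Fin R) (Fin R) ℂ))
    (hTadd : ∀ P S, T (P + S) = T P + T S)
    (hTmod : ∀ (A : Matrix (Fin R) (Fin R) ℂ) P, T (C A * P) = C A * T P)
    (hTsym : ∀ P S, ip (T P) S = ip P (T S))
    (hTdeg : ∀ n, (T (Q n)).natDegree ≤ n + 1) :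
    (∀ n j, j + 1 < n → ip (T (Q n)) (Q j) = 0) ∧
      ∃ X Y Z : ℕ → Matrix (Fin R) (Fin R) ℂ,
        (∀ n, T (Q n) = C (X n) * Q (n + 1) + C (Y n) * Q n +
          (if n = 0 then 0 else C (Z n) * Q (n - 1))) ∧
        (∀ n, Z (n + 1) = (X n)ᴴ) ∧ (∀ n, Y n = (Y n)ᴴ) := by
  classical
  -- zero lemmas
  have h0l : ∀ S, ip 0 S = 0 := by
    intro S
    have h := hadd_left 0 0 S
    rw [add_zero] at h
    exact (left_eq_add.mp h)
  have h0r : ∀ P, ip P 0 = 0 := by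
    intro P
    have h := hadd_right P 0 0
    rw [add_zero] at h
    exact (left_eq_add.mp h)
  -- sums
  have hsum_left : ∀ (s : Finset ℕ) (f : ℕ → Polynomial (Matrix (Fin R) (Fin R) ℂ)) S,
      ip (∑ i ∈ s, f i) S = ∑ i ∈ s, ip (f i) S := by
    intro s f S
    induction s using Finset.induction_on with
    | empty => simp [h0l]
    | insert _ _ h ih => rw [Finset.sum_insert h, Finset.sum_insert h, hadd_left, ih]
  have hsum_right : ∀ (s : Finset ℕ) (f : ℕ → Polynomial (Matrix (Fin R) (Fin R) ℂ)) P,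
      ip P (∑ i ∈ s, f i) = ∑ i ∈ s, ip P (f i) := by
    intro s f P
    induction s using Finset.induction_on with
    | empty => simp [h0r]
    | insert _ _ h ih => rw [Finset.sum_insert h, Finset.sum_insert h, hadd_right, ih]
  -- conjugate symmetry against basis elements
  have hconj : ∀ P j, ip (Q j) P = (ip P (Q j))ᴴ := by
    intro P j
    obtain ⟨c, hc⟩ := hbasis P
    conv_lhs => rw [hc]
    conv_rhs => rw [hc]
    rw [hsum_right, hsum_left, Matrix.conjTranspose_sum]
    refine Finset.sum_congr rfl fun i _ => ?_
    rw [hmul_right, hmul_left, honb, honb]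
    by_cases h : i = j
    · simp [h]
    · have h' : ¬ (j = i) := fun hh => h hh.symm
      simp [h, h']
  -- vanishing below the degree
  have hQrightAll : ∀ P j, P.natDegree < j → ip P (Q j) = 0 := by
    intro P j hj
    obtain ⟨c, hc⟩ := hbasis P
    conv_lhs => rw [hc]
    rw [hsum_left]
    refine Finset.sum_eq_zero fun i hi => ?_
    rw [hmul_left, honb]
    have hi' : i ≠ j := by
      have := Finset.mem_range.mp hi; omega
    simp [hi']
  have hQleftAll : ∀ P j, P.natDegree < j → ip (Q j) P = 0 := by
    intro P j hj
    rw [hconj, hQrightAll P j hj, Matrix.conjTranspose_zero]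
  -- part 1
  have hvanish : ∀ n j, j + 1 < n → ip (T (Q n)) (Q j) = 0 := by
    intro n j hj
    rw [hTsym]
    exact hQleftAll _ n (lt_of_le_of_lt (hTdeg j) hj)
  refine ⟨hvanish, ?_⟩
  -- coefficients of T (Q n)
  have hipc : ∀ n i, ip (T (Q n)) (Q i)
      = if i < (T (Q n)).natDegree + 1 then (hbasis (T (Q n))).choose i else 0 := by
    intro n i
    have hc := (hbasis (T (Q n))).choose_spec
    conv_lhs => rw [hc]
    rw [hsum_left]
    have : ∀ k, ip (C ((hbasis (T (Q n))).choose k) * Q k) (Q i)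
        = if k = i then (hbasis (T (Q n))).choose k else 0 := by
      intro k
      rw [hmul_left, honb, mul_ite, mul_one, mul_zero]
    simp_rw [this]
    rw [Finset.sum_ite_eq' (Finset.range _) i]
    simp [Finset.mem_range]
  -- the full expansion over range (n+2)
  have hexp : ∀ n, T (Q n)
      = ∑ i ∈ Finset.range (n + 2), C (ip (T (Q n)) (Q i)) * Q i := by
    intro n
    have hc := (hbasis (T (Q n))).choose_spec
    have hd : (T (Q n)).natDegree + 1 ≤ n + 2 := by
      have := hTdeg n; omega
    rw [← Finset.sum_range_add_sum_Ico _ hd]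
    have h1 : ∑ i ∈ Finset.range ((T (Q n)).natDegree + 1), C (ip (T (Q n)) (Q i)) * Q i
        = T (Q n) := by
      conv_rhs => rw [hc]
      refine Finset.sum_congr rfl fun i hi => ?_
      rw [hipc]
      rw [if_pos (Finset.mem_range.mp hi)]
    have h2 : ∑ i ∈ Finset.Ico ((T (Q n)).natDegree + 1) (n + 2),
        C (ip (T (Q n)) (Q i)) * Q i = 0 := by
      refine Finset.sum_eq_zero fun i hi => ?_
      have hi' : ¬ i < (T (Q n)).natDegree + 1 := by
        have := (Finset.mem_Ico.mp hi).1; omega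
      rw [hipc, if_neg hi', map_zero, zero_mul]
    rw [h1, h2, add_zero]
  refine ⟨fun n => ip (T (Q n)) (Q (n + 1)), fun n => ip (T (Q n)) (Q n),
    fun n => ip (T (Q n)) (Q (n - 1)), ?_, ?_, ?_⟩
  · intro n
    match n with
    | 0 =>
      rw [hexp 0]
      simp [Finset.sum_range_succ]
      abel
    | (m + 1) =>
      rw [hexp (m + 1)]
      rw [Finset.sum_range_succ, Finset.sum_range_succ, Finset.sum_range_succ]
      have hz : ∑ i ∈ Finset.range m, C (ip (T (Q (m + 1))) (Q i)) * Q i = 0 := by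
        refine Finset.sum_eq_zero fun i hi => ?_
        rw [hvanish (m + 1) i (by have := Finset.mem_range.mp hi; omega), map_zero, zero_mul]
      rw [hz, zero_add]
      simp only [Nat.add_sub_cancel, if_neg (Nat.succ_ne_zero m)]
      abel
  · intro n
    show ip (T (Q (n + 1))) (Q (n + 1 - 1)) = (ip (T (Q n)) (Q (n + 1)))ᴴ
    simp only [Nat.add_sub_cancel]
    rw [hTsym, hconj]
  · intro n
    show ip (T (Q n)) (Q n) = (ip (T (Q n)) (Q n))ᴴ
    conv_lhs => rw [hTsym, hconj]
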